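/- Let λ, μ be partitions of n with λ ≤ μ in dominance order, and suppose ∑_{j=1}^k λ*_j = ∑_{j=1}^k μ*_j for some k ≥ 1. Then ∑_{j=1}^{λ*_{k+1}} λ_j = ∑_{j=1}^{λ*_{k+1}} μ_j. -/

import Mathlib

open Finset

/-- Partial sum `∑_{j=1}^i f j` (one-indexed). -/
def psum (f : ℕ → ℕ) (i : ℕ) : ℕ := ∑ j ∈ Finset.Icc 1 i, f j

/-- Conjugate partition: `conj f j = #{k ≥ 1 : f k ≥ j}`. -/
noncomputable def conj (f : ℕ → ℕ) (j : ℕ) : ℕ := Set.ncard {k : ℕ | 1 ≤ k ∧ j ≤ f k}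

/-- `f` is a partition of `n` (one-indexed, weakly decreasing, eventually zero). -/
def IsPartitionOf (f : ℕ → ℕ) (n : ℕ) : Prop :=
  (∀ i, 1 ≤ i → f (i + 1) ≤ f i) ∧ ∃ N, (∀ i, N < i → f i = 0) ∧ psum f N = n

/-- Weakly decreasing (from index 1 on). -/
def Decr (f : ℕ → ℕ) : Prop := ∀ i, 1 ≤ i → f (i + 1) ≤ f i

/-- `A_i = ∑_{j ≤ i} (α_j + β_j)`. -/
def AA (f g : ℕ → ℕ) (i : ℕ) : ℕ := ∑ j ∈ Finset.Icc 1 i, (f j + g j)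

/-- `B_i = ∑_{j < i} (α_j + β_j) + α_i`. -/
def BB (f g : ℕ → ℕ) (i : ℕ) : ℕ := (∑ j ∈ Finset.Icc 1 (i - 1), (f j + g j)) + f i

/-- Multiplicity of `i` as a part. -/
noncomputable def mult (f : ℕ → ℕ) (i : ℕ) : ℕ := conj f i - conj f (i + 1)

lemma conj_eq_card (f : ℕ → ℕ) (N : ℕ) (hN : ∀ i, N < i → f i = 0) (j : ℕ) (hj : 1 ≤ j) :
    conj f j = ((Finset.Icc 1 N).filter (fun i => j ≤ f i)).card := by
  have hset : {k : ℕ | 1 ≤ k ∧ j ≤ f k}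
      = ((Finset.Icc 1 N).filter (fun i => j ≤ f i) : Finset ℕ) := by
    ext i
    simp only [Set.mem_setOf_eq, Finset.coe_filter, Finset.mem_Icc, Set.mem_setOf_eq]
    constructor
    · rintro ⟨h1, h2⟩
      refine ⟨⟨h1, ?_⟩, h2⟩
      by_contra h; push_neg at h
      have := hN i h; omega
    · rintro ⟨⟨h1, _⟩, h2⟩; exact ⟨h1, h2⟩
  rw [conj, hset, Set.ncard_coe_finset]

lemma psum_conj_eq (f : ℕ → ℕ) (N : ℕ) (hN : ∀ i, N < i → f i = 0) (k : ℕ) :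
    psum (conj f) k = ∑ i ∈ Finset.Icc 1 N, min (f i) k := by
  unfold psum
  rw [Finset.sum_congr rfl (fun j hj => conj_eq_card f N hN j (Finset.mem_Icc.mp hj).1)]
  simp_rw [Finset.card_filter]
  rw [Finset.sum_comm]
  apply Finset.sum_congr rfl
  intro i _
  have : (Finset.Icc 1 k).filter (fun j => j ≤ f i) = Finset.Icc 1 (min (f i) k) := by
    ext x; simp only [Finset.mem_filter, Finset.mem_Icc]; omega
  rw [← Finset.card_filter, this, Nat.card_Icc]
  omega

lemma psum_stable (f : ℕ → ℕ) (N M : ℕ) (hN : ∀ i, N < i → f i = 0) (h : N ≤ M) :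
    psum f M = psum f N := by
  unfold psum
  symm
  apply Finset.sum_subset
  · exact Finset.Icc_subset_Icc_right h
  · intro x hx hnx
    simp only [Finset.mem_Icc] at hx hnx
    exact hN x (by omega)

lemma dc_eq_Icc (F : Finset ℕ) (h0 : 0 ∉ F)
    (hdc : ∀ i ∈ F, ∀ i', 1 ≤ i' → i' ≤ i → i' ∈ F) :
    F = Finset.Icc 1 F.card := by
  ext i
  simp only [Finset.mem_Icc]
  constructor
  · intro hi
    have h1 : 1 ≤ i := Nat.pos_of_ne_zero (fun h => h0 (h ▸ hi))
    refine ⟨h1, ?_⟩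
    have hsub : Finset.Icc 1 i ⊆ F := by
      intro x hx
      simp only [Finset.mem_Icc] at hx
      exact hdc i hi x hx.1 hx.2
    have := Finset.card_le_card hsub
    rwa [Nat.card_Icc, Nat.add_sub_cancel] at this
  · rintro ⟨h1, h2⟩
    by_contra hi
    have hsub : F ⊆ Finset.Icc 1 (i - 1) := by
      intro x hx
      simp only [Finset.mem_Icc]
      have hx1 : 1 ≤ x := Nat.pos_of_ne_zero (fun h => h0 (h ▸ hx))
      refine ⟨hx1, ?_⟩
      by_contra hxi; push_neg at hxi
      exact hi (hdc x hx i h1 (by omega))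
    have := Finset.card_le_card hsub
    rw [Nat.card_Icc] at this
    omega

lemma decr_anti (f : ℕ → ℕ) (hf : ∀ i, 1 ≤ i → f (i + 1) ≤ f i) :
    ∀ a b, 1 ≤ a → a ≤ b → f b ≤ f a := by
  intro a b ha hab
  induction b with
  | zero => omega
  | succ b ih =>
    rcases Nat.lt_or_ge a (b + 1) with h | h
    · exact le_trans (hf b (by omega)) (ih (by omega))
    · have : a = b + 1 := by omega
      rw [this]

theorem stmt3 (n : ℕ) (l m : ℕ → ℕ) (hl : IsPartitionOf l n) (hm : IsPartitionOf m n)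
    (hdom : ∀ i, 1 ≤ i → psum l i ≤ psum m i)
    (k : ℕ) (hk : 1 ≤ k) (heq : psum (conj l) k = psum (conj m) k) :
    psum l (conj l (k + 1)) = psum m (conj l (k + 1)) := by
  obtain ⟨hld, Nl, hNl, hnl⟩ := hl
  obtain ⟨hmd, Nm, hNm, hnm⟩ := hm
  set N := max Nl Nm with hNdef
  have hNl' : ∀ i, N < i → l i = 0 := fun i hi => hNl i (by omega)
  have hNm' : ∀ i, N < i → m i = 0 := fun i hi => hNm i (by omega)
  have hsl : ∑ i ∈ Finset.Icc 1 N, l i = n := by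
    have h := psum_stable l Nl N hNl (le_max_left _ _)
    rw [hnl] at h; exact h
  have hsm : ∑ i ∈ Finset.Icc 1 N, m i = n := by
    have h := psum_stable m Nm N hNm (le_max_right _ _)
    rw [hnm] at h; exact h
  have hminl : psum (conj l) k = ∑ i ∈ Finset.Icc 1 N, min (l i) k := psum_conj_eq l N hNl' k
  have hminm : psum (conj m) k = ∑ i ∈ Finset.Icc 1 N, min (m i) k := psum_conj_eq m N hNm' k
  have hsubeq : ∑ i ∈ Finset.Icc 1 N, (l i - k) = ∑ i ∈ Finset.Icc 1 N, (m i - k) := by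
    have h1 : ∑ i ∈ Finset.Icc 1 N, min (l i) k + ∑ i ∈ Finset.Icc 1 N, (l i - k) = n := by
      rw [← Finset.sum_add_distrib, ← hsl]
      exact Finset.sum_congr rfl (fun i _ => by omega)
    have h2 : ∑ i ∈ Finset.Icc 1 N, min (m i) k + ∑ i ∈ Finset.Icc 1 N, (m i - k) = n := by
      rw [← Finset.sum_add_distrib, ← hsm]
      exact Finset.sum_congr rfl (fun i _ => by omega)
    have h3 : ∑ i ∈ Finset.Icc 1 N, min (l i) k = ∑ i ∈ Finset.Icc 1 N, min (m i) k := by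
      rw [← hminl, ← hminm, heq]
    omega
  set F := (Finset.Icc 1 N).filter (fun i => k + 1 ≤ l i) with hFdef
  have ht : conj l (k + 1) = F.card := conj_eq_card l N hNl' (k + 1) (by omega)
  have hFIcc : F = Finset.Icc 1 F.card := by
    apply dc_eq_Icc
    · simp [hFdef]
    · intro i hi i' h1 h2
      simp only [hFdef, Finset.mem_filter, Finset.mem_Icc] at hi ⊢
      exact ⟨⟨h1, le_trans h2 hi.1.2⟩, le_trans hi.2 (decr_anti l hld i' i h1 h2)⟩
  have htN : F.card ≤ N := by
    have := Finset.card_le_card (Finset.filter_subset (fun i => k + 1 ≤ l i) (Finset.Icc 1 N))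
    rwa [Nat.card_Icc, Nat.add_sub_cancel] at this
  have hmemF : ∀ i ∈ Finset.Icc 1 F.card, k + 1 ≤ l i := by
    intro i hi
    have : i ∈ F := hFIcc ▸ hi
    exact (Finset.mem_filter.mp this).2
  have hsubl : ∑ i ∈ Finset.Icc 1 F.card, (l i - k) = ∑ i ∈ Finset.Icc 1 N, (l i - k) := by
    apply Finset.sum_subset (Finset.Icc_subset_Icc_right htN)
    intro x hx hnx
    have hxF : x ∉ F := fun h => hnx (hFIcc ▸ h)
    have hxk : l x ≤ k := by
      by_contra h
      exact hxF (Finset.mem_filter.mpr ⟨hx, by omega⟩)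
    omega
  have hl' : psum l F.card = F.card * k + ∑ i ∈ Finset.Icc 1 N, (l i - k) := by
    rw [← hsubl]
    unfold psum
    calc ∑ i ∈ Finset.Icc 1 F.card, l i
        = ∑ i ∈ Finset.Icc 1 F.card, (k + (l i - k)) := by
          exact Finset.sum_congr rfl (fun i hi => by have := hmemF i hi; omega)
      _ = F.card * k + ∑ i ∈ Finset.Icc 1 F.card, (l i - k) := by
          rw [Finset.sum_add_distrib, Finset.sum_const, Nat.card_Icc, Nat.add_sub_cancel,
            smul_eq_mul]
  rw [ht]
  rcases Nat.eq_zero_or_pos F.card with h0 | hpos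
  · rw [h0]; simp [psum]
  · refine le_antisymm (hdom F.card hpos) ?_
    calc psum m F.card
        = ∑ i ∈ Finset.Icc 1 F.card, m i := rfl
      _ ≤ ∑ i ∈ Finset.Icc 1 F.card, (k + (m i - k)) :=
          Finset.sum_le_sum (fun i _ => by omega)
      _ = F.card * k + ∑ i ∈ Finset.Icc 1 F.card, (m i - k) := by
          rw [Finset.sum_add_distrib, Finset.sum_const, Nat.card_Icc, Nat.add_sub_cancel,
            smul_eq_mul]
      _ ≤ F.card * k + ∑ i ∈ Finset.Icc 1 N, (m i - k) := by
          exact Nat.add_le_add_left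
            (Finset.sum_le_sum_of_subset (Finset.Icc_subset_Icc_right htN)) _
      _ = psum l F.card := by rw [hl', hsubeq]
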